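/- Let a, λ, c > 0 and M(x) = (c/(1 − exp(a/λ))) · exp((a/λ)x). Let w : [0,∞) × [0,1] → ℝ be continuously differentiable and satisfy the transport equation w_t(t,x) + λ w_x(t,x) = 0 for all t ≥ 0 and x ∈ [0,1], the boundary condition w(t,0) = w(t,1) for all t ≥ 0, and the output condition ∫₀¹ M(x) w(t,x) dx = 0 for all t ≥ 0. Then w(t,1) = 0 for all t ≥ 0. -/

import Mathlib

open MeasureTheory

/-- The forwarding gain `M(x) = (c/(1 − e^{a/λ})) e^{(a/λ)x}`, unique solution of
`λM′ = aM` on `[0,1]` with `M(0) = M(1) + c`. -/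
noncomputable def Mfun (a lam c : ℝ) (x : ℝ) : ℝ :=
  (c / (1 - Real.exp (a / lam))) * Real.exp ((a / lam) * x)

/-- If a C¹ solution `w` of the transport equation `w_t + λw_x = 0` on
`[0,∞) × [0,1]` with periodic boundary condition `w(t,0) = w(t,1)` has zero forwarding
output `∫₀¹ M(x)w(t,x)dx = 0` for all `t ≥ 0`, then `w(t,1) = 0` for all `t ≥ 0`. -/
theorem statement15 (a lam c : ℝ) (ha : 0 < a) (hlam : 0 < lam) (hc : 0 < c)
    (w wt wx : ℝ → ℝ → ℝ)
    -- w is continuously differentiable with partial derivatives wt, wx: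
    (hwt : ∀ t ∈ Set.Ici (0:ℝ), ∀ x ∈ Set.Icc (0:ℝ) 1,
      HasDerivWithinAt (fun τ => w τ x) (wt t x) (Set.Ici 0) t)
    (hwx : ∀ t ∈ Set.Ici (0:ℝ), ∀ x ∈ Set.Icc (0:ℝ) 1,
      HasDerivWithinAt (fun y => w t y) (wx t x) (Set.Icc 0 1) x)
    (hwtc : ContinuousOn (fun q : ℝ × ℝ => wt q.1 q.2) (Set.Ici 0 ×ˢ Set.Icc 0 1))
    (hwxc : ContinuousOn (fun q : ℝ × ℝ => wx q.1 q.2) (Set.Ici 0 ×ˢ Set.Icc 0 1))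
    -- the transport equation:
    (hpde : ∀ t ∈ Set.Ici (0:ℝ), ∀ x ∈ Set.Icc (0:ℝ) 1, wt t x + lam * wx t x = 0)
    -- the boundary condition:
    (hbc : ∀ t ∈ Set.Ici (0:ℝ), w t 0 = w t 1)
    -- the output condition:
    (hout : ∀ t ∈ Set.Ici (0:ℝ), (∫ x in (0:ℝ)..1, Mfun a lam c x * w t x) = 0) :
    ∀ t ∈ Set.Ici (0:ℝ), w t 1 = 0 := by
  have hk0 : 0 < a / lam := div_pos ha hlam
  set M : ℝ → ℝ := Mfun a lam c with hMdef
  have hMcont : Continuous M := by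
    unfold M; unfold Mfun; continuity
  have hMderiv : ∀ x : ℝ, HasDerivAt M ((a / lam) * M x) x := by
    intro x
    have h1 : HasDerivAt (fun y : ℝ => (a / lam) * y) (a / lam) x := by
      simpa using (hasDerivAt_id x).const_mul (a / lam)
    have h2 := (h1.exp).const_mul (c / (1 - Real.exp (a / lam)))
    convert h2 using 1
    · rfl
    · rfl
    · rfl
    · unfold M; unfold Mfun; ring
  have hMdiff : M 0 - M 1 = c := by
    have he : (1 : ℝ) - Real.exp (a / lam) ≠ 0 :=
      sub_ne_zero.mpr (ne_of_lt (Real.one_lt_exp_iff.mpr hk0))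
    unfold M; unfold Mfun
    field_simp
    simp
  -- continuity of slices
  have hwcont : ∀ t ∈ Set.Ici (0:ℝ), ContinuousOn (fun x => w t x) (Set.Icc 0 1) :=
    fun t ht x hx => (hwx t ht x hx).continuousWithinAt
  have hwxcont : ∀ t ∈ Set.Ici (0:ℝ), ContinuousOn (fun x => wx t x) (Set.Icc 0 1) := by
    intro t ht
    exact hwxc.comp (Continuous.continuousOn (by fun_prop) : ContinuousOn (fun x : ℝ => ((t, x) : ℝ × ℝ)) (Set.Icc 0 1))
      (fun x hx => ⟨ht, hx⟩)
  have hwtconts : ∀ x ∈ Set.Icc (0:ℝ) 1, ContinuousOn (fun s => wt s x) (Set.Ici 0) := by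
    intro x hx
    exact hwtc.comp (Continuous.continuousOn (by fun_prop) : ContinuousOn (fun s : ℝ => ((s, x) : ℝ × ℝ)) (Set.Ici 0))
      (fun s hs => ⟨hs, hx⟩)
  have hwconts : ∀ x ∈ Set.Icc (0:ℝ) 1, ContinuousOn (fun s => w s x) (Set.Ici 0) :=
    fun x hx s hs => (hwt s hs x hx).continuousWithinAt
  -- Step A : ∫ M wx = -(c * w t 1)
  have hA : ∀ t ∈ Set.Ici (0:ℝ), (∫ x in (0:ℝ)..1, M x * wx t x) = -(c * w t 1) := by
    intro t ht
    have hint1 : IntervalIntegrable (fun x => (a / lam) * (M x * w t x)) volume 0 1 := by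
      apply ContinuousOn.intervalIntegrable
      rw [Set.uIcc_of_le zero_le_one]
      exact continuousOn_const.mul (hMcont.continuousOn.mul (hwcont t ht))
    have hint2 : IntervalIntegrable (fun x => M x * wx t x) volume 0 1 := by
      apply ContinuousOn.intervalIntegrable
      rw [Set.uIcc_of_le zero_le_one]
      exact hMcont.continuousOn.mul (hwxcont t ht)
    have hftc : (∫ x in (0:ℝ)..1, ((a / lam) * (M x * w t x) + M x * wx t x))
        = M 1 * w t 1 - M 0 * w t 0 := by
      refine intervalIntegral.integral_eq_sub_of_hasDeriv_right_of_le (f := fun x => M x * w t x)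
          (f' := fun x => (a / lam) * (M x * w t x) + M x * wx t x) zero_le_one ?_ ?_ ?_
      · exact hMcont.continuousOn.mul (hwcont t ht)
      · intro x hx
        have hdw : HasDerivAt (fun y => w t y) (wx t x) x :=
          (hwx t ht x (Set.Ioo_subset_Icc_self hx)).hasDerivAt (Icc_mem_nhds hx.1 hx.2)
        have h3 := ((hMderiv x).mul hdw).hasDerivWithinAt (s := Set.Ioi x)
        convert h3 using 1
        · rfl
        · ring
      · exact hint1.add hint2
    rw [intervalIntegral.integral_add hint1 hint2, intervalIntegral.integral_const_mul,
      hout t ht, mul_zero, zero_add, hbc t ht] at hftc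
    rw [hftc]
    linear_combination (-(w t 1)) * hMdiff
  -- Step B : ∫ M wt = lam * c * w t 1
  have hB : ∀ t ∈ Set.Ici (0:ℝ), (∫ x in (0:ℝ)..1, M x * wt t x) = lam * c * w t 1 := by
    intro t ht
    have hcg : ∀ x ∈ Set.uIcc (0:ℝ) 1, M x * wt t x = -lam * (M x * wx t x) := by
      intro x hx
      rw [Set.uIcc_of_le zero_le_one] at hx
      linear_combination (M x) * (hpde t ht x hx)
    rw [intervalIntegral.integral_congr hcg, intervalIntegral.integral_const_mul, hA t ht]
    ring
  -- Step C : FTC in time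
  have hC : ∀ t ∈ Set.Ici (0:ℝ), ∀ x ∈ Set.Icc (0:ℝ) 1,
      (∫ s in (0:ℝ)..t, wt s x) = w t x - w 0 x := by
    intro t ht x hx
    apply intervalIntegral.integral_eq_sub_of_hasDeriv_right_of_le ht
    · exact (hwconts x hx).mono Set.Icc_subset_Ici_self
    · intro s hs
      exact ((hwt s hs.1.le x hx).hasDerivAt (Ici_mem_nhds hs.1)).hasDerivWithinAt
    · apply ContinuousOn.intervalIntegrable
      exact (hwtconts x hx).mono (by rw [Set.uIcc_of_le ht]; exact Set.Icc_subset_Ici_self)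
  -- Step D : Fubini, giving ∫_0^t w s 1 ds = 0
  have key : ∀ t ∈ Set.Ici (0:ℝ), (∫ s in (0:ℝ)..t, w s 1) = 0 := by
    intro t ht
    have hGcont : ContinuousOn (fun p : ℝ × ℝ => M p.2 * wt p.1 p.2)
        (Set.Icc 0 t ×ˢ Set.Icc 0 1) := by
      apply ContinuousOn.mul
      · exact (hMcont.comp continuous_snd).continuousOn
      · exact hwtc.mono (Set.prod_mono Set.Icc_subset_Ici_self subset_rfl)
    have hGint : IntegrableOn (fun p : ℝ × ℝ => M p.2 * wt p.1 p.2)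
        (Set.Ioc 0 t ×ˢ Set.Ioc 0 1) volume :=
      (hGcont.integrableOn_compact (isCompact_Icc.prod isCompact_Icc)).mono_set
        (Set.prod_mono Set.Ioc_subset_Icc_self Set.Ioc_subset_Icc_self)
    have hswap : (∫ s in Set.Ioc (0:ℝ) t, ∫ x in Set.Ioc (0:ℝ) 1, M x * wt s x)
        = ∫ x in Set.Ioc (0:ℝ) 1, ∫ s in Set.Ioc (0:ℝ) t, M x * wt s x := by
      apply MeasureTheory.integral_integral_swap
      rw [Measure.prod_restrict]
      have : Function.uncurry (fun s x => M x * wt s x)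
          = fun p : ℝ × ℝ => M p.2 * wt p.1 p.2 := rfl
      rw [this, ← MeasureTheory.Measure.volume_eq_prod]
      exact hGint
    have hxside : (∫ x in Set.Ioc (0:ℝ) 1, ∫ s in Set.Ioc (0:ℝ) t, M x * wt s x) = 0 := by
      have h1 : ∀ x ∈ Set.Ioc (0:ℝ) 1,
          (∫ s in Set.Ioc (0:ℝ) t, M x * wt s x) = M x * w t x - M x * w 0 x := by
        intro x hx
        have hx' : x ∈ Set.Icc (0:ℝ) 1 := Set.Ioc_subset_Icc_self hx
        rw [MeasureTheory.integral_const_mul, ← intervalIntegral.integral_of_le ht,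
          hC t ht x hx']
        ring
      rw [setIntegral_congr_fun measurableSet_Ioc h1]
      have hi1 : IntegrableOn (fun x => M x * w t x) (Set.Ioc 0 1) volume :=
        ((hMcont.continuousOn.mul (hwcont t ht)).integrableOn_compact isCompact_Icc).mono_set
          Set.Ioc_subset_Icc_self
      have hi2 : IntegrableOn (fun x => M x * w 0 x) (Set.Ioc 0 1) volume :=
        ((hMcont.continuousOn.mul (hwcont 0 Set.self_mem_Ici)).integrableOn_compact isCompact_Icc).mono_set
          Set.Ioc_subset_Icc_self
      rw [MeasureTheory.integral_sub hi1 hi2]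
      have e1 : (∫ x in Set.Ioc (0:ℝ) 1, M x * w t x) = 0 := by
        rw [← intervalIntegral.integral_of_le zero_le_one]; exact hout t ht
      have e2 : (∫ x in Set.Ioc (0:ℝ) 1, M x * w 0 x) = 0 := by
        rw [← intervalIntegral.integral_of_le zero_le_one]; exact hout 0 Set.self_mem_Ici
      rw [e1, e2, sub_zero]
    have hsside : (∫ s in Set.Ioc (0:ℝ) t, ∫ x in Set.Ioc (0:ℝ) 1, M x * wt s x)
        = lam * c * ∫ s in Set.Ioc (0:ℝ) t, w s 1 := by
      have h1 : ∀ s ∈ Set.Ioc (0:ℝ) t,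
          (∫ x in Set.Ioc (0:ℝ) 1, M x * wt s x) = lam * c * w s 1 := by
        intro s hs
        rw [← intervalIntegral.integral_of_le zero_le_one]
        exact hB s hs.1.le
      rw [setIntegral_congr_fun measurableSet_Ioc h1, MeasureTheory.integral_const_mul]
    have hlc : lam * c ≠ 0 := ne_of_gt (mul_pos hlam hc)
    have : lam * c * (∫ s in Set.Ioc (0:ℝ) t, w s 1) = 0 := by
      rw [← hsside, hswap, hxside]
    rw [intervalIntegral.integral_of_le ht]
    exact (mul_eq_zero.mp this).resolve_left hlc
  -- Step E : conclude w t 1 = 0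
  have h1mem : (1:ℝ) ∈ Set.Icc (0:ℝ) 1 := ⟨zero_le_one, le_rfl⟩
  have hfc : ContinuousOn (fun s => w s 1) (Set.Ici 0) := hwconts 1 h1mem
  have hpos : ∀ t : ℝ, 0 < t → w t 1 = 0 := by
    intro t ht'
    have hint : IntervalIntegrable (fun s => w s 1) volume 0 t := by
      apply ContinuousOn.intervalIntegrable
      exact hfc.mono (by rw [Set.uIcc_of_le ht'.le]; exact Set.Icc_subset_Ici_self)
    have hmeas : StronglyMeasurableAtFilter (fun s => w s 1) (nhds t) volume :=
      (hfc.mono Set.Ioi_subset_Ici_self).stronglyMeasurableAtFilter isOpen_Ioi t ht'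
    have hcontAt : ContinuousAt (fun s => w s 1) t :=
      (hfc t ht'.le).continuousAt (Ici_mem_nhds ht')
    have hFder : HasDerivAt (fun u => ∫ s in (0:ℝ)..u, w s 1) (w t 1) t :=
      intervalIntegral.integral_hasDerivAt_right hint hmeas hcontAt
    have hEq : (fun u => ∫ s in (0:ℝ)..u, w s 1) =ᶠ[nhds t] fun _ => (0:ℝ) := by
      filter_upwards [Ioi_mem_nhds ht'] with u hu
      exact key u (Set.mem_Ici.mpr (le_of_lt (Set.mem_Ioi.mp hu)))
    have hFder' : HasDerivAt (fun u => ∫ s in (0:ℝ)..u, w s 1) 0 t :=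
      (hasDerivAt_const t (0:ℝ)).congr_of_eventuallyEq hEq
    exact hFder.unique hFder'
  intro t ht
  rcases eq_or_lt_of_le (Set.mem_Ici.mp ht) with h0 | h0
  · -- t = 0 : use right-continuity
    have htend1 : Filter.Tendsto (fun s => w s 1) (nhdsWithin 0 (Set.Ioi 0)) (nhds (w 0 1)) := by
      have := (hfc 0 Set.self_mem_Ici).mono Set.Ioi_subset_Ici_self
      exact this.tendsto
    have htend2 : Filter.Tendsto (fun s => w s 1) (nhdsWithin 0 (Set.Ioi 0)) (nhds 0) := by
      apply Filter.Tendsto.congr' _ tendsto_const_nhds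
      filter_upwards [self_mem_nhdsWithin] with s hs
      exact (hpos s hs).symm
    rw [← h0]
    exact tendsto_nhds_unique htend1 htend2
  · exact hpos t h0
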